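/- Let ψ : [0,∞) → [0,∞) be a concave one-dimensional cohesive density with ψ'(0) > 0, and let ε > 0. Then there exists a unique z̄ > 0 satisfying z̄ = εψ'(z̄), and the function ψ_ε defined by ψ_ε(y) := y²/(2ε) for 0 ≤ y ≤ z̄ and ψ_ε(y) := ψ(y) − ψ(z̄) + z̄²/(2ε) for y > z̄ is again a one-dimensional cohesive density: it is nonnegative with ψ_ε(0) = 0, continuously differentiable on [0,∞) with locally Lipschitz derivative, bounded, Lipschitz, nondecreasing, satisfies ψ_ε'(y) − yψ_ε''(y) ≥ 0 for a.e. y > 0 and sup_{y>0} yψ_ε'(y) < ∞; moreover ψ_ε is concave on [z̄,∞). -/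

import Mathlib

open MeasureTheory Set

/-- A one-dimensional cohesive density `f : [0,∞) → [0,∞)`, together with its derivative
`f'` and its (a.e. defined) second derivative `f''`: `f` is of class `C¹` with locally
Lipschitz derivative, bounded, Lipschitz, nondecreasing, `f(0) = 0`,
`f'(y) − y f''(y) ≥ 0` a.e. and `sup_{y>0} y f'(y) < ∞`. -/
structure CohesiveDensity where
  f : ℝ → ℝ
  f' : ℝ → ℝ
  f'' : ℝ → ℝ
  nonneg : ∀ y : ℝ, 0 ≤ y → 0 ≤ f y
  zero : f 0 = 0
  deriv_at : ∀ y : ℝ, 0 < y → HasDerivAt f (f' y) y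
  deriv_at0 : HasDerivWithinAt f (f' 0) (Ici 0) 0
  deriv_cont : ContinuousOn f' (Ici 0)
  deriv_locLip : ∀ b : ℝ, 0 < b → ∃ L : ℝ, ∀ x ∈ Icc (0:ℝ) b, ∀ y ∈ Icc (0:ℝ) b,
    |f' x - f' y| ≤ L * |x - y|
  bounded : ∃ M : ℝ, ∀ y : ℝ, 0 ≤ y → f y ≤ M
  lip : ∃ L : ℝ, ∀ x : ℝ, 0 ≤ x → ∀ y : ℝ, 0 ≤ y → |f x - f y| ≤ L * |x - y|
  mono : MonotoneOn f (Ici 0)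
  snd_deriv_ae : ∀ᵐ y ∂(volume : Measure ℝ), 0 < y → HasDerivAt f' (f'' y) y
  psi_a : ∀ᵐ y ∂(volume : Measure ℝ), 0 < y → 0 ≤ f' y - y * f'' y
  psi_b : ∃ M : ℝ, ∀ y : ℝ, 0 < y → y * f' y ≤ M

/-- Gluing lemma for Lipschitz-type estimates across a junction point `z`. -/
lemma glue_abs_le {h : ℝ → ℝ} {z L : ℝ} {P : ℝ → Prop} (hL : 0 ≤ L) (hPz : P z)
    (h1 : ∀ a, P a → a ≤ z → ∀ b, P b → b ≤ z → |h a - h b| ≤ L * |a - b|)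
    (h2 : ∀ a, P a → z ≤ a → ∀ b, P b → z ≤ b → |h a - h b| ≤ L * |a - b|)
    (a : ℝ) (ha : P a) (b : ℝ) (hb : P b) : |h a - h b| ≤ L * |a - b| := by
  rcases le_total a z with haz | haz <;> rcases le_total b z with hbz | hbz
  · exact h1 a ha haz b hb hbz
  · calc |h a - h b| ≤ |h a - h z| + |h z - h b| := abs_sub_le _ _ _
      _ ≤ L * |a - z| + L * |z - b| :=
        add_le_add (h1 a ha haz z hPz le_rfl) (h2 z hPz le_rfl b hb hbz)
      _ = L * |a - b| := by
        rw [abs_of_nonpos (by linarith), abs_of_nonpos (by linarith),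
          abs_of_nonpos (by linarith)]; ring
  · calc |h a - h b| ≤ |h a - h z| + |h z - h b| := abs_sub_le _ _ _
      _ ≤ L * |a - z| + L * |z - b| :=
        add_le_add (h2 a ha haz z hPz le_rfl) (h1 z hPz le_rfl b hb hbz)
      _ = L * |a - b| := by
        rw [abs_of_nonneg (by linarith), abs_of_nonneg (by linarith),
          abs_of_nonneg (by linarith)]; ring
  · exact h2 a ha haz b hb hbz

/-- given a concave one-dimensional cohesive density `ψ` with `ψ'(0) > 0`
and `ε > 0`, there is a unique `z̄ > 0` with `z̄ = εψ'(z̄)`, and the intrinsic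
regularization `ψ_ε` (quadratic on `[0,z̄]`, shifted `ψ` beyond) is again a
one-dimensional cohesive density, concave on `[z̄,∞)`. -/
theorem statement19 (D : CohesiveDensity) (hconc : ConcaveOn ℝ (Ici 0) D.f)
    (hpos : 0 < D.f' 0) (ε : ℝ) (hε : 0 < ε) :
    (∃! z : ℝ, 0 < z ∧ z = ε * D.f' z) ∧
    ∀ z : ℝ, 0 < z → z = ε * D.f' z →
      let g : ℝ → ℝ := fun y =>
        if y ≤ z then y ^ 2 / (2 * ε) else D.f y - D.f z + z ^ 2 / (2 * ε)
      let g' : ℝ → ℝ := fun y => if y ≤ z then y / ε else D.f' y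
      let g'' : ℝ → ℝ := fun y => if y ≤ z then 1 / ε else D.f'' y
      (∀ y : ℝ, 0 ≤ y → 0 ≤ g y) ∧ g 0 = 0 ∧
      (∀ y : ℝ, 0 < y → HasDerivAt g (g' y) y) ∧
      HasDerivWithinAt g (g' 0) (Ici 0) 0 ∧
      ContinuousOn g' (Ici 0) ∧
      (∀ b : ℝ, 0 < b → ∃ L : ℝ, ∀ x ∈ Icc (0:ℝ) b, ∀ y ∈ Icc (0:ℝ) b,
        |g' x - g' y| ≤ L * |x - y|) ∧
      (∃ M : ℝ, ∀ y : ℝ, 0 ≤ y → g y ≤ M) ∧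
      (∃ L : ℝ, ∀ x : ℝ, 0 ≤ x → ∀ y : ℝ, 0 ≤ y → |g x - g y| ≤ L * |x - y|) ∧
      MonotoneOn g (Ici 0) ∧
      (∀ᵐ y ∂(volume : Measure ℝ), 0 < y → HasDerivAt g' (g'' y) y) ∧
      (∀ᵐ y ∂(volume : Measure ℝ), 0 < y → 0 ≤ g' y - y * g'' y) ∧
      (∃ M : ℝ, ∀ y : ℝ, 0 < y → y * g' y ≤ M) ∧
      ConcaveOn ℝ (Ici z) g := by
  -- `f'` is nonnegative on `(0,∞)`
  have hf'nonneg : ∀ y : ℝ, 0 < y → 0 ≤ D.f' y := by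
    intro y hy
    have hslope : slope D.f y (y + 1) ≤ D.f' y :=
      hconc.slope_le_of_hasDerivAt (mem_Ici.mpr hy.le) (mem_Ici.mpr (by linarith))
        (by linarith) (D.deriv_at y hy)
    refine le_trans ?_ hslope
    rw [slope_def_field]
    have hm := D.mono (mem_Ici.mpr hy.le) (mem_Ici.mpr (by linarith : (0:ℝ) ≤ y + 1))
      (by linarith)
    apply div_nonneg <;> linarith
  -- `f'` is antitone on `[0,∞)`
  have hanti : ∀ x : ℝ, 0 ≤ x → ∀ y : ℝ, x < y → D.f' y ≤ D.f' x := by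
    intro x hx y hxy
    have hy : 0 < y := lt_of_le_of_lt hx hxy
    have hdx : HasDerivWithinAt D.f (D.f' x) (Ici 0) x := by
      rcases eq_or_lt_of_le hx with h | h
      · rw [← h]; exact D.deriv_at0
      · exact (D.deriv_at x h).hasDerivWithinAt
    have h1 : D.f' y ≤ slope D.f x y :=
      hconc.le_slope_of_hasDerivAt (mem_Ici.mpr hx) (mem_Ici.mpr hy.le) hxy (D.deriv_at y hy)
    have h2 : slope D.f x y ≤ D.f' x :=
      hconc.slope_le_of_hasDerivWithinAt (mem_Ici.mpr hx) (mem_Ici.mpr hy.le) hxy hdx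
    linarith
  constructor
  · -- existence and uniqueness of the fixed point
    obtain ⟨M, hM⟩ := D.psi_b
    have hM0 : 0 ≤ M := le_trans (by simpa using hf'nonneg 1 one_pos) (hM 1 one_pos)
    set B : ℝ := ε * M + 1 with hB
    have hB1 : 1 ≤ B := by nlinarith
    have hB0 : 0 < B := by linarith
    set φ : ℝ → ℝ := fun y => ε * D.f' y - y with hφ
    have hφcont : ContinuousOn φ (Icc 0 B) :=
      (continuousOn_const.mul (D.deriv_cont.mono Icc_subset_Ici_self)).sub continuousOn_id
    have hφ0 : 0 < φ 0 := by
      simp only [hφ, sub_zero]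
      exact mul_pos hε hpos
    have hφB : φ B < 0 := by
      have hfB := hM B hB0
      have hfB' : D.f' B ≤ M / B := by
        rw [le_div_iff₀ hB0]; nlinarith
      have h1 : ε * D.f' B ≤ ε * (M / B) := mul_le_mul_of_nonneg_left hfB' hε.le
      have h2 : ε * (M / B) ≤ ε * M := by
        rw [mul_div_assoc', div_le_iff₀ hB0]
        nlinarith
      simp only [hφ]
      nlinarith
    have hmem : (0:ℝ) ∈ Icc (φ B) (φ 0) := ⟨hφB.le, hφ0.le⟩
    obtain ⟨c, hc, hc0⟩ := intermediate_value_Icc' hB0.le hφcont hmem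
    have hceq : c = ε * D.f' c := by
      simp only [hφ] at hc0; linarith
    have hcpos : 0 < c := by
      rcases eq_or_lt_of_le hc.1 with h | h
      · exfalso; rw [← h] at hc0; linarith
      · exact h
    refine ⟨c, ⟨hcpos, hceq⟩, ?_⟩
    rintro w ⟨hw0, hweq⟩
    rcases lt_trichotomy w c with h | h | h
    · exfalso
      have h1 := hanti w hw0.le c h
      have h2 : c ≤ w := by
        rw [hceq, hweq]; exact mul_le_mul_of_nonneg_left h1 hε.le
      linarith
    · exact h
    · exfalso
      have h1 := hanti c hcpos.le w h
      have h2 : w ≤ c := by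
        rw [hceq, hweq]; exact mul_le_mul_of_nonneg_left h1 hε.le
      linarith
  · -- properties of the regularization
    intro z hz0 hz g g' g''
    have hfz : D.f' z = z / ε := by
      rw [eq_div_iff hε.ne']
      linarith [hz]
    set quad : ℝ → ℝ := fun y => y ^ 2 / (2 * ε) with hquaddef
    have hquad : ∀ y : ℝ, HasDerivAt quad (y / ε) y := by
      intro y
      have h := (hasDerivAt_pow 2 y).div_const (2 * ε)
      refine h.congr_deriv ?_
      push_cast
      field_simp
    have hgIic : EqOn g quad (Iic z) := by
      intro y hy
      simp only [g, quad, if_pos (mem_Iic.mp hy)]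
    have hgIci : EqOn g (fun y => D.f y - D.f z + z ^ 2 / (2 * ε)) (Ici z) := by
      intro y hy
      by_cases h : y ≤ z
      · have hyz : y = z := le_antisymm h (mem_Ici.mp hy)
        subst hyz
        simp [g]
      · simp only [g, if_neg h]
    have hg'Iic : EqOn g' (fun y => y / ε) (Iic z) := by
      intro y hy
      simp only [g', if_pos (mem_Iic.mp hy)]
    have hg'Ici : EqOn g' D.f' (Ici z) := by
      intro y hy
      by_cases h : y ≤ z
      · have hyz : y = z := le_antisymm h (mem_Ici.mp hy)
        subst hyz
        simp [g', hfz]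
      · simp only [g', if_neg h]
    -- derivative of g at every positive point
    have hderiv : ∀ y : ℝ, 0 < y → HasDerivAt g (g' y) y := by
      intro y hy
      rcases lt_trichotomy y z with h | h | h
      · have heq : g =ᶠ[nhds y] quad :=
          Filter.eventuallyEq_of_mem (Iio_mem_nhds h) fun x hx => hgIic (mem_Iic.mpr (le_of_lt hx))
        have hd : HasDerivAt g (y / ε) y := (hquad y).congr_of_eventuallyEq heq
        have : g' y = y / ε := hg'Iic (mem_Iic.mpr h.le)
        rw [this]; exact hd
      · subst h
        have h1 : HasDerivWithinAt g (y / ε) (Iic y) y :=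
          ((hquad y).hasDerivWithinAt).congr hgIic (hgIic (mem_Iic.mpr le_rfl))
        have h2 : HasDerivWithinAt g (y / ε) (Ici y) y := by
          have hd : HasDerivAt (fun x => D.f x - D.f y + y ^ 2 / (2 * ε)) (D.f' y) y :=
            ((D.deriv_at y hy).sub_const _).add_const _
          rw [hfz] at hd
          exact hd.hasDerivWithinAt.congr hgIci (hgIci (mem_Ici.mpr le_rfl))
        have h3 := h1.union h2
        rw [Iic_union_Ici] at h3
        have h4 := hasDerivWithinAt_univ.mp h3
        have : g' y = y / ε := hg'Iic (mem_Iic.mpr le_rfl)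
        rw [this]; exact h4
      · have heq : g =ᶠ[nhds y] fun x => D.f x - D.f z + z ^ 2 / (2 * ε) :=
          Filter.eventuallyEq_of_mem (Ioi_mem_nhds h) fun x hx => hgIci (mem_Ici.mpr (le_of_lt hx))
        have hd : HasDerivAt (fun x => D.f x - D.f z + z ^ 2 / (2 * ε)) (D.f' y) y :=
          ((D.deriv_at y (lt_trans hz0 h)).sub_const _).add_const _
        have hd2 : HasDerivAt g (D.f' y) y := hd.congr_of_eventuallyEq heq
        have : g' y = D.f' y := hg'Ici (mem_Ici.mpr h.le)
        rw [this]; exact hd2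
    -- derivative at 0 within Ici 0
    have hderiv0 : HasDerivWithinAt g (g' 0) (Ici 0) 0 := by
      have heq : g =ᶠ[nhdsWithin 0 (Ici 0)] quad :=
        Filter.eventuallyEq_of_mem (nhdsWithin_le_nhds (Iio_mem_nhds hz0))
          fun x hx => hgIic (mem_Iic.mpr (le_of_lt hx))
      have h0 : HasDerivWithinAt quad (0 / ε) (Ici 0) 0 := (hquad 0).hasDerivWithinAt
      have h1 := h0.congr_of_eventuallyEq heq (hgIic (mem_Iic.mpr hz0.le))
      have : g' 0 = 0 / ε := hg'Iic (mem_Iic.mpr hz0.le)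
      rw [this]; exact h1
    -- a.e. statement that y ≠ z
    have hzne : ∀ᵐ (y : ℝ) ∂(volume : Measure ℝ), y ≠ z := by
      refine ae_iff.mpr ?_
      have hset : {y : ℝ | ¬ y ≠ z} = {z} := by ext w; simp
      rw [hset]
      exact measure_singleton z
    refine ⟨?_, ?_, hderiv, hderiv0, ?_, ?_, ?_, ?_, ?_, ?_, ?_, ?_, ?_⟩
    · -- nonneg
      intro y hy
      by_cases h : y ≤ z
      · rw [hgIic (mem_Iic.mpr h)]
        simp only [quad]
        positivity
      · rw [hgIci (mem_Ici.mpr (not_le.mp h).le)]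
        have h1 : D.f z ≤ D.f y :=
          D.mono (mem_Ici.mpr hz0.le) (mem_Ici.mpr (by linarith [not_le.mp h]))
            (not_le.mp h).le
        have h2 : (0:ℝ) ≤ z ^ 2 / (2 * ε) := by positivity
        simp only
        linarith
    · -- g 0 = 0
      rw [hgIic (mem_Iic.mpr hz0.le)]
      simp [quad]
    · -- continuity of g'
      have c1 : ContinuousOn g' (Iic z) :=
        ((continuous_id.div_const ε).continuousOn).congr hg'Iic
      have c2 : ContinuousOn g' (Ici z) :=
        (D.deriv_cont.mono (Ici_subset_Ici.mpr hz0.le)).congr hg'Ici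
      have hsub : Ici (0:ℝ) ⊆ Iic z ∪ Ici z := by
        intro x _
        rcases le_total x z with h | h
        · exact Or.inl h
        · exact Or.inr h
      intro y hy
      rcases lt_trichotomy y z with h | h | h
      · refine (ContinuousWithinAt.union (c1 y (mem_Iic.mpr h.le))
          (continuousWithinAt_of_notMem_closure ?_)).mono hsub
        rw [closure_Ici]
        exact not_le.mpr h
      · subst h
        exact (ContinuousWithinAt.union (c1 y (mem_Iic.mpr le_rfl)) (c2 y (mem_Ici.mpr le_rfl))).mono hsub
      · refine (ContinuousWithinAt.union
          (continuousWithinAt_of_notMem_closure ?_) (c2 y (mem_Ici.mpr h.le))).mono hsub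
        rw [closure_Iic]
        exact not_le.mpr h
    · -- local Lipschitz of g'
      intro b hb
      obtain ⟨Lb, hLb⟩ := D.deriv_locLip b hb
      refine ⟨max (1 / ε) Lb, ?_⟩
      have hL0 : (0:ℝ) ≤ max (1 / ε) Lb := le_trans (by positivity) (le_max_left _ _)
      have h1 : ∀ a, a ∈ Icc (0:ℝ) b → a ≤ z → ∀ c, c ∈ Icc (0:ℝ) b → c ≤ z →
          |g' a - g' c| ≤ max (1 / ε) Lb * |a - c| := by
        intro a ha haz c hc hcz
        rw [hg'Iic (mem_Iic.mpr haz), hg'Iic (mem_Iic.mpr hcz)]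
        have he : a / ε - c / ε = (1 / ε) * (a - c) := by field_simp
        simp only
        rw [he, abs_mul, abs_of_pos (by positivity : (0:ℝ) < 1 / ε)]
        exact mul_le_mul_of_nonneg_right (le_max_left _ _) (abs_nonneg _)
      have h2 : ∀ a, a ∈ Icc (0:ℝ) b → z ≤ a → ∀ c, c ∈ Icc (0:ℝ) b → z ≤ c →
          |g' a - g' c| ≤ max (1 / ε) Lb * |a - c| := by
        intro a ha haz c hc hcz
        rw [hg'Ici (mem_Ici.mpr haz), hg'Ici (mem_Ici.mpr hcz)]
        exact (hLb a ha c hc).trans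
          (mul_le_mul_of_nonneg_right (le_max_right _ _) (abs_nonneg _))
      intro x hx y hy
      by_cases hbz : b ≤ z
      · exact h1 x hx (hx.2.trans hbz) y hy (hy.2.trans hbz)
      · exact glue_abs_le hL0 ⟨hz0.le, (not_le.mp hbz).le⟩ h1 h2 x hx y hy
    · -- bounded
      obtain ⟨M, hM⟩ := D.bounded
      refine ⟨M + z ^ 2 / (2 * ε), ?_⟩
      intro y hy
      have hM0 : 0 ≤ M := le_trans (D.nonneg z hz0.le) (hM z hz0.le)
      by_cases h : y ≤ z
      · rw [hgIic (mem_Iic.mpr h)]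
        simp only [quad]
        have h2 : y ^ 2 ≤ z ^ 2 := by nlinarith
        have h3 : y ^ 2 / (2 * ε) ≤ z ^ 2 / (2 * ε) := by gcongr
        linarith
      · rw [hgIci (mem_Ici.mpr (not_le.mp h).le)]
        have h1 : D.f y ≤ M := hM y (by linarith [not_le.mp h])
        have h2 : 0 ≤ D.f z := D.nonneg z hz0.le
        simp only
        linarith
    · -- Lipschitz
      obtain ⟨Lf, hLf⟩ := D.lip
      refine ⟨max (z / ε) Lf, ?_⟩
      have hL0 : (0:ℝ) ≤ max (z / ε) Lf := le_trans (by positivity) (le_max_left _ _)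
      have h1 : ∀ a, 0 ≤ a → a ≤ z → ∀ c, 0 ≤ c → c ≤ z →
          |g a - g c| ≤ max (z / ε) Lf * |a - c| := by
        intro a ha haz c hc hcz
        rw [hgIic (mem_Iic.mpr haz), hgIic (mem_Iic.mpr hcz)]
        have he : quad a - quad c = (a + c) * (a - c) / (2 * ε) := by
          simp only [quad]; field_simp; ring
        rw [he, abs_div, abs_of_pos (by positivity : (0:ℝ) < 2 * ε), abs_mul]
        have h3 : |a + c| ≤ 2 * z := by
          rw [abs_of_nonneg (by linarith)]; linarith
        calc |a + c| * |a - c| / (2 * ε) ≤ 2 * z * |a - c| / (2 * ε) := by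
              gcongr
          _ = (z / ε) * |a - c| := by field_simp
          _ ≤ max (z / ε) Lf * |a - c| :=
              mul_le_mul_of_nonneg_right (le_max_left _ _) (abs_nonneg _)
      have h2 : ∀ a, 0 ≤ a → z ≤ a → ∀ c, 0 ≤ c → z ≤ c →
          |g a - g c| ≤ max (z / ε) Lf * |a - c| := by
        intro a ha haz c hc hcz
        rw [hgIci (mem_Ici.mpr haz), hgIci (mem_Ici.mpr hcz)]
        have he : (D.f a - D.f z + z ^ 2 / (2 * ε)) - (D.f c - D.f z + z ^ 2 / (2 * ε))
            = D.f a - D.f c := by ring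
        simp only
        rw [he]
        exact (hLf a ha c hc).trans
          (mul_le_mul_of_nonneg_right (le_max_right _ _) (abs_nonneg _))
      intro x hx y hy
      exact glue_abs_le hL0 hz0.le (fun a ha => h1 a ha) (fun a ha => h2 a ha) x hx y hy
    · -- monotone
      have hg'nn : ∀ x ∈ interior (Ici (0:ℝ)), 0 ≤ deriv g x := by
        intro x hx
        rw [interior_Ici] at hx
        rw [(hderiv x hx).deriv]
        by_cases h : x ≤ z
        · rw [hg'Iic (mem_Iic.mpr h)]
          exact div_nonneg (le_of_lt hx) hε.le
        · rw [hg'Ici (mem_Ici.mpr (not_le.mp h).le)]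
          exact hf'nonneg x hx
      have hdiff : DifferentiableOn ℝ g (interior (Ici (0:ℝ))) := by
        rw [interior_Ici]
        intro x hx
        exact ((hderiv x hx).differentiableAt).differentiableWithinAt
      have hcont : ContinuousOn g (Ici 0) := by
        intro x hx
        rcases eq_or_lt_of_le (mem_Ici.mp hx) with h | h
        · rw [← h]; exact hderiv0.continuousWithinAt
        · exact ((hderiv x h).continuousAt).continuousWithinAt
      exact monotoneOn_of_deriv_nonneg (convex_Ici 0) hcont hdiff hg'nn
    · -- a.e. second derivative
      filter_upwards [D.snd_deriv_ae, hzne] with y h2 hne hy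
      rcases hne.lt_or_gt with h | h
      · have heq : g' =ᶠ[nhds y] fun x => x / ε :=
          Filter.eventuallyEq_of_mem (Iio_mem_nhds h) fun x hx => hg'Iic (mem_Iic.mpr (le_of_lt hx))
        have hd : HasDerivAt (fun x : ℝ => x / ε) (1 / ε) y := by
          simpa using (hasDerivAt_id y).div_const ε
        have hd2 : HasDerivAt g' (1 / ε) y := hd.congr_of_eventuallyEq heq
        have he : g'' y = 1 / ε := if_pos h.le
        rw [he]; exact hd2
      · have heq : g' =ᶠ[nhds y] D.f' :=
          Filter.eventuallyEq_of_mem (Ioi_mem_nhds h) fun x hx => hg'Ici (mem_Ici.mpr (le_of_lt hx))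
        have hd2 : HasDerivAt g' (D.f'' y) y := (h2 hy).congr_of_eventuallyEq heq
        have he : g'' y = D.f'' y := if_neg (not_le.mpr h)
        rw [he]; exact hd2
    · -- a.e. psi_a
      filter_upwards [D.psi_a, hzne] with y h2 hne hy
      rcases hne.lt_or_gt with h | h
      · have e1 : g' y = y / ε := hg'Iic (mem_Iic.mpr h.le)
        have e2 : g'' y = 1 / ε := if_pos h.le
        rw [e1, e2]
        have : y / ε - y * (1 / ε) = 0 := by field_simp; ring
        rw [this]
      · have e1 : g' y = D.f' y := hg'Ici (mem_Ici.mpr h.le)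
        have e2 : g'' y = D.f'' y := if_neg (not_le.mpr h)
        rw [e1, e2]
        exact h2 hy
    · -- sup y g' y < ∞
      obtain ⟨M, hM⟩ := D.psi_b
      refine ⟨max (z ^ 2 / ε) M, ?_⟩
      intro y hy
      by_cases h : y ≤ z
      · rw [hg'Iic (mem_Iic.mpr h)]
        have h1 : y * (y / ε) ≤ z ^ 2 / ε := by
          have hyz : y * y ≤ z ^ 2 := by nlinarith [hy.le, h]
          calc y * (y / ε) = y * y / ε := by ring
            _ ≤ z ^ 2 / ε := by gcongr
        exact h1.trans (le_max_left _ _)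
      · rw [hg'Ici (mem_Ici.mpr (not_le.mp h).le)]
        exact (hM y hy).trans (le_max_right _ _)
    · -- concavity on [z, ∞)
      have hsubc : ConcaveOn ℝ (Ici z) D.f :=
        hconc.subset (Ici_subset_Ici.mpr hz0.le) (convex_Ici z)
      have hc2 : ConcaveOn ℝ (Ici z) (fun y => D.f y + (z ^ 2 / (2 * ε) - D.f z)) :=
        hsubc.add_const _
      refine ⟨convex_Ici z, ?_⟩
      intro x hx y hy a b ha hb hab
      have hmem : a • x + b • y ∈ Ici z := (convex_Ici z) hx hy ha hb hab
      have h3 := hc2.2 hx hy ha hb hab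
      rw [hgIci hmem, hgIci hx, hgIci hy]
      simp only [smul_eq_mul] at h3 ⊢
      nlinarith [h3]
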